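/- arXiv:0808.0228 — 3 statements merged into one kernel-verified Lean document; each statement's English description precedes it below -/
import Mathlib

section
/- Let G be a self-adjoint operator on a Hilbert space, L a finite-dimensional subspace of Dom(G), and λ ∈ ℂ with nonzero imaginary part. Suppose there exists a nonzero v ∈ L such that ⟨(λ - G)v, (conj(λ) - G)w⟩ = 0 for all w ∈ L. Then dist(Re λ, Spec(G)) ≤ |Im λ|; in particular the interval [Re λ - |Im λ|, Re λ + |Im λ|] intersects Spec(G). -/
open scoped ComplexConjugate

lemma resolvent_bound {H : Type*} [NormedAddCommGroup H] [InnerProductSpace ℂ H]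
    [CompleteSpace H] (G : H →L[ℂ] H) (hG : IsSelfAdjoint G) (a : ℝ) (v : H) (hv : v ≠ 0) :
    Metric.infDist ((a : ℂ)) (spectrum ℂ G) * ‖v‖ ≤ ‖(a : ℂ) • v - G v‖ := by
  haveI : Nontrivial H := ⟨v, 0, hv⟩
  set d := Metric.infDist ((a : ℂ)) (spectrum ℂ G) with hd
  rcases (Metric.infDist_nonneg : 0 ≤ d).eq_or_lt with h0 | h0
  · rw [hd, ← h0, zero_mul]; exact norm_nonneg _
  · have hnm : ((a : ℂ)) ∉ spectrum ℂ G := fun hmem => by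
      simp [hd, Metric.infDist_zero_of_mem hmem] at h0
    obtain ⟨u, hu⟩ := spectrum.notMem_iff.mp hnm
    have hTsa : IsSelfAdjoint (↑u : H →L[ℂ] H) := by
      rw [hu]
      refine IsSelfAdjoint.sub ?_ hG
      simp [IsSelfAdjoint, ← algebraMap_star_comm, Complex.conj_ofReal]
    have hsa : IsSelfAdjoint (↑u⁻¹ : H →L[ℂ] H) := by
      rw [← Ring.inverse_unit]
      unfold IsSelfAdjoint
      rw [← Ring.inverse_star, hTsa.star_eq]
    obtain ⟨z, hz, hz2⟩ := spectrum.exists_nnnorm_eq_spectralRadius (↑u⁻¹ : H →L[ℂ] H)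
    rw [hsa.spectralRadius_eq_nnnorm] at hz2
    have hznorm : ‖(↑u⁻¹ : H →L[ℂ] H)‖ = ‖z‖ := by
      have := ENNReal.coe_injective hz2
      simpa [← NNReal.coe_inj] using this.symm
    have hz0 : z ≠ 0 := by
      intro h
      rw [h] at hz
      exact (spectrum.zero_notMem_iff ℂ).mpr u⁻¹.isUnit hz
    have hzinv : z⁻¹ ∈ spectrum ℂ (↑u : H →L[ℂ] H) := by
      have := (spectrum.inv_mem_iff (r := Units.mk0 z hz0) (a := u⁻¹)).mpr
      simpa using this (by simpa using hz)
    rw [hu, ← spectrum.singleton_sub_eq] at hzinv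
    obtain ⟨x, hx, t, ht, hxt⟩ := hzinv
    rw [Set.mem_singleton_iff] at hx
    subst hx
    have hxt' : (a : ℂ) - t = z⁻¹ := hxt
    have hdt : d ≤ ‖(a : ℂ) - t‖ := by
      simpa [dist_eq_norm] using Metric.infDist_le_dist_of_mem ht
    rw [hxt', norm_inv] at hdt
    have hznpos : 0 < ‖z‖ := norm_pos_iff.mpr hz0
    have hzle : ‖z‖ ≤ d⁻¹ := by
      have h1 := mul_le_mul_of_nonneg_right hdt hznpos.le
      rw [inv_mul_cancel₀ hznpos.ne'] at h1
      have h2 := mul_le_mul_of_nonneg_left h1 (inv_nonneg.mpr h0.le)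
      rw [mul_one, ← mul_assoc, inv_mul_cancel₀ h0.ne', one_mul] at h2
      exact h2
    have hvv : (↑u⁻¹ : H →L[ℂ] H) ((↑u : H →L[ℂ] H) v) = v := by
      rw [← ContinuousLinearMap.mul_apply, u.inv_mul, ContinuousLinearMap.one_apply]
    have hle : ‖v‖ ≤ d⁻¹ * ‖(↑u : H →L[ℂ] H) v‖ := by
      calc ‖v‖ = ‖(↑u⁻¹ : H →L[ℂ] H) ((↑u : H →L[ℂ] H) v)‖ := by rw [hvv]
        _ ≤ ‖(↑u⁻¹ : H →L[ℂ] H)‖ * ‖(↑u : H →L[ℂ] H) v‖ := ContinuousLinearMap.le_opNorm _ _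
        _ ≤ d⁻¹ * ‖(↑u : H →L[ℂ] H) v‖ := by
            apply mul_le_mul_of_nonneg_right _ (norm_nonneg _)
            rw [hznorm]; exact hzle
    have huv : (↑u : H →L[ℂ] H) v = (a : ℂ) • v - G v := by
      rw [hu]
      simp [ContinuousLinearMap.sub_apply, Algebra.algebraMap_eq_smul_one]
    rw [huv] at hle
    rw [mul_comm]
    rwa [← le_div_iff₀ h0, div_eq_inv_mul]

/-- Non-pollution part of the quadratic projection method: if λ with Im λ ≠ 0 is in the
second order spectrum of a self-adjoint operator `G` relative to a finite-dimensional
subspace `L`, then `dist(Re λ, Spec G) ≤ |Im λ|`; in particular the interval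
`[Re λ - |Im λ|, Re λ + |Im λ|]` meets the spectrum of `G`. -/
theorem stmt0 {H : Type*} [NormedAddCommGroup H] [InnerProductSpace ℂ H] [CompleteSpace H]
    (G : H →L[ℂ] H) (hG : IsSelfAdjoint G)
    (L : Submodule ℂ H) (hL : FiniteDimensional ℂ L)
    (lam : ℂ) (hlam : lam.im ≠ 0)
    (v : H) (hvL : v ∈ L) (hv : v ≠ 0)
    (hweak : ∀ w ∈ L,
      (inner ℂ (lam • v - G v) ((starRingEnd ℂ) lam • w - G w) : ℂ) = 0) :
    Metric.infDist ((lam.re : ℂ)) (spectrum ℂ G) ≤ |lam.im| ∧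
      ∃ x : ℝ, (x : ℂ) ∈ spectrum ℂ G ∧
        x ∈ Set.Icc (lam.re - |lam.im|) (lam.re + |lam.im|) := by
  haveI : Nontrivial H := ⟨v, 0, hv⟩
  set a := lam.re
  set b := lam.im
  set X := (a : ℂ) • v - G v with hX
  set c : ℂ := (b : ℂ) * Complex.I with hc
  have hP : lam • v - G v = X + c • v := by
    rw [hX, hc]
    have : lam = (a : ℂ) + (b : ℂ) * Complex.I := (Complex.re_add_im lam).symm
    rw [this, add_smul]
    abel
  have hQ : (starRingEnd ℂ) lam • v - G v = X - c • v := by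
    rw [hX, hc]
    have : (starRingEnd ℂ) lam = (a : ℂ) - (b : ℂ) * Complex.I := by
      apply Complex.ext <;> simp <;> rfl
    rw [this, sub_smul]
    abel
  have h0 : (inner ℂ (X + c • v) (X - c • v) : ℂ) = 0 := by
    rw [← hP, ← hQ]; exact hweak v hvL
  have hexp : (inner ℂ (X + c • v) (X - c • v) : ℂ) =
      inner ℂ X X - (starRingEnd ℂ) c * c * inner ℂ v v
        + ((starRingEnd ℂ) c * (inner ℂ v X : ℂ) - c * inner ℂ X v) := by
    simp only [inner_add_left, inner_sub_right, inner_smul_left, inner_smul_right]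
    ring
  rw [hexp] at h0
  have hre : ‖X‖ ^ 2 - b ^ 2 * ‖v‖ ^ 2 = 0 := by
    have h := congrArg Complex.re h0
    have hcc : (starRingEnd ℂ) c * c = ((b ^ 2 : ℝ) : ℂ) := by
      rw [← Complex.normSq_eq_conj_mul_self]
      norm_cast
      simp [hc, Complex.normSq_mul, Complex.normSq_I, Complex.normSq_ofReal, sq]
    have hterm : ((starRingEnd ℂ) c * (inner ℂ v X : ℂ) - c * inner ℂ X v).re = 0 := by
      rw [← inner_conj_symm X v]
      generalize (inner ℂ v X : ℂ) = z
      simp only [Complex.sub_re, Complex.mul_re, Complex.conj_re, Complex.conj_im]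
      ring
    rw [Complex.add_re, Complex.sub_re, hterm, hcc, Complex.mul_re] at h
    have h1 : (inner ℂ X X : ℂ).re = ‖X‖ ^ 2 := by
      rw [inner_self_eq_norm_sq_to_K]; norm_cast
    have h2 : (inner ℂ v v : ℂ).re = ‖v‖ ^ 2 := by
      rw [inner_self_eq_norm_sq_to_K]; norm_cast
    have h3 : (inner ℂ v v : ℂ).im = 0 := by
      rw [inner_self_eq_norm_sq_to_K]; norm_cast
    rw [h1, h2, h3] at h
    simp only [Complex.ofReal_re, Complex.ofReal_im, Complex.zero_re, mul_zero, sub_zero,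
      add_zero] at h
    linarith
  have hXle : ‖X‖ ≤ |b| * ‖v‖ := by
    nlinarith [norm_nonneg X, mul_nonneg (abs_nonneg b) (norm_nonneg v), sq_abs b]
  have hvpos : (0 : ℝ) < ‖v‖ := norm_pos_iff.mpr hv
  have hmain : Metric.infDist ((a : ℂ)) (spectrum ℂ G) ≤ |b| := by
    have h := resolvent_bound G hG a v hv
    rw [← hX] at h
    have h2 : Metric.infDist ((a : ℂ)) (spectrum ℂ G) * ‖v‖ ≤ |b| * ‖v‖ := le_trans h hXle
    exact le_of_mul_le_mul_right h2 hvpos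
  refine ⟨hmain, ?_⟩
  have hne : (spectrum ℂ G).Nonempty := spectrum.nonempty G
  have hcpt : IsCompact (spectrum ℂ G) := spectrum.isCompact G
  obtain ⟨z, hzmem, hzd⟩ := hcpt.exists_infDist_eq_dist hne ((a : ℂ))
  have hzre : z = (z.re : ℂ) := hG.mem_spectrum_eq_re hzmem
  refine ⟨z.re, by rwa [← hzre], ?_⟩
  have hdist : |a - z.re| ≤ |b| := by
    have : dist ((a : ℂ)) z = |a - z.re| := by
      rw [hzre, dist_eq_norm, ← Complex.ofReal_sub]
      rw [Complex.norm_real, Real.norm_eq_abs, Complex.ofReal_re]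
    rw [← this, ← hzd]
    exact hmain
  rw [abs_sub_le_iff] at hdist
  exact Set.mem_Icc.mpr ⟨by linarith [hdist.1, hdist.2], by linarith [hdist.1, hdist.2]⟩
end

section
/- Let G be self-adjoint, E an isolated eigenvalue of G with eigenspace E_sp and spectral-gap distance d_E = dist(E, Spec(G) \ {E}) > 0. Let λ ∈ ℂ and nonzero v ∈ Dom(G) satisfy ‖(Re λ - G)v‖ = |Im λ|·‖v‖ and Im λ · ⟨(Re λ - G)v, v⟩ = 0 with Im λ ≠ 0. Then ‖(E - G)v‖² = |E - λ|² ‖v‖², and if Π denotes the orthogonal projection onto the eigenspace of E, then ‖v - Πv‖ ≤ (|E - λ| / d_E) ‖v‖. -/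
open ContinuousLinearMap in
lemma gap_lower_bound {H : Type*} [NormedAddCommGroup H] [InnerProductSpace ℂ H] [CompleteSpace H]
    (G : H →L[ℂ] H) (hG : IsSelfAdjoint G)
    (E dE : ℝ) (hdEpos : 0 < dE)
    (hgap : ∀ x ∈ spectrum ℝ G, x ≠ E → dE ≤ |x - E|)
    (Esp : Submodule ℂ H)
    (hEsp : ∀ x : H, x ∈ Esp ↔ G x = (E : ℂ) • x)
    (w : H) (hw : w ∈ Espᗮ) :
    dE * ‖w‖ ≤ ‖(E : ℂ) • w - G w‖ := by
  classical
  set χ : ℝ → ℝ := fun x => max 0 (1 - |x - E| / dE) with hχdef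
  have hχc : Continuous χ := by
    apply Continuous.max continuous_const
    fun_prop
  have hχE : χ E = 1 := by simp [hχdef]
  have hχ0 : ∀ x ∈ spectrum ℝ G, x ≠ E → χ x = 0 := by
    intro x hx hne
    have h := hgap x hx hne
    have h2 : 1 - |x - E| / dE ≤ 0 := by
      rw [sub_nonpos, le_div_iff₀ hdEpos]; linarith
    simp [hχdef, max_eq_left h2]
  have hgc : Continuous (fun x : ℝ => (E - x) ^ 2 + dE ^ 2 * χ x) :=
    ((continuous_const.sub continuous_id).pow 2).add (continuous_const.mul hχc)
  set P : H →L[ℂ] H := cfc χ G with hPdef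
  set K : H →L[ℂ] H := algebraMap ℝ (H →L[ℂ] H) E - G with hKdef
  have hKapp : ∀ x : H, K x = (E : ℂ) • x - G x := by
    intro x
    rw [hKdef, ContinuousLinearMap.sub_apply, Algebra.algebraMap_eq_smul_one,
      ContinuousLinearMap.smul_apply, ContinuousLinearMap.one_apply, ← Complex.coe_smul]
  have hKsa : IsSelfAdjoint K :=
    IsSelfAdjoint.sub (IsSelfAdjoint.algebraMap _ (IsSelfAdjoint.all E)) hG
  -- P w is in the eigenspace
  have hGP : G * P = cfc (fun x => x * χ x) G := by
    conv_lhs => rw [← cfc_id' ℝ G hG]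
    rw [← cfc_mul _ _ G (by fun_prop) hχc.continuousOn]
  have hEP : (E : ℝ) • P = cfc (fun x => E * χ x) G := by
    rw [cfc_const_mul E χ G hχc.continuousOn]
  have hGPEP : G * P = (E : ℝ) • P := by
    rw [hGP, hEP]
    apply cfc_congr
    intro x hx
    by_cases hxE : x = E
    · subst hxE; rfl
    · simp [hχ0 x hx hxE]
  have hPw : G (P w) = (E : ℂ) • (P w) := by
    have := congrArg (fun (T : H →L[ℂ] H) => T w) hGPEP
    simp only [mul_apply, smul_apply] at this
    have h' : G (P w) = (G * P) w := rfl
    rw [h', this, ← Complex.coe_smul]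
  have hPwEsp : P w ∈ Esp := (hEsp (P w)).mpr hPw
  -- the operator inequality
  have key : algebraMap ℝ (H →L[ℂ] H) (dE ^ 2)
      ≤ cfc (fun x => (E - x) ^ 2 + dE ^ 2 * χ x) G := by
    rw [← cfc_const (dE ^ 2) G hG]
    refine cfc_mono (fun x hx => ?_) continuousOn_const
      hgc.continuousOn
    by_cases hxE : x = E
    · subst hxE; simp [hχE]
    · have h := hgap x hx hxE
      have habs : dE ^ 2 ≤ (E - x) ^ 2 := by
        have := sq_abs (x - E)
        nlinarith [abs_nonneg (x - E)]
      simp only [hχ0 x hx hxE, mul_zero, add_zero]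
      linarith
  have hdecomp : cfc (fun x => (E - x) ^ 2 + dE ^ 2 * χ x) G
      = K ^ 2 + (dE ^ 2 : ℝ) • P := by
    rw [cfc_add (a := G) (fun x => (E - x) ^ 2) (fun x => dE ^ 2 * χ x)
      (((continuous_const.sub continuous_id).pow 2).continuousOn)
      ((continuous_const.mul hχc).continuousOn)]
    congr 1
    · rw [cfc_pow (fun x => E - x) 2 G (by fun_prop), hKdef]
      congr 1
      rw [cfc_sub (fun _ => E) (fun x => x) G (by fun_prop) (by fun_prop),
        cfc_const E G hG, cfc_id' ℝ G hG]
    · rw [cfc_const_mul (dE ^ 2) χ G hχc.continuousOn]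
  rw [hdecomp] at key
  have hpos := (ContinuousLinearMap.le_def _ _).mp key
  have hinner := hpos.inner_nonneg_left w
  -- compute the inner product
  have hPinner : (inner ℂ (P w) w : ℂ) = 0 := by
    exact (Submodule.mem_orthogonal Esp w).mp hw (P w) hPwEsp
  have hKinner : (inner ℂ ((K ^ 2) w) w : ℂ) = (‖K w‖ ^ 2 : ℝ) := by
    have h0 : (K ^ 2) w = K (K w) := by rw [sq]; rfl
    have h1 : (inner ℂ (K (K w)) w : ℂ) = inner ℂ (K w) (K w) := by
      nth_rewrite 1 [← hKsa.adjoint_eq]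
      exact ContinuousLinearMap.adjoint_inner_left K w (K w)
    rw [h0, h1, inner_self_eq_norm_sq_to_K]
    norm_num
  have halg : (algebraMap ℝ (H →L[ℂ] H) (dE ^ 2)) w = ((dE ^ 2 : ℝ) : ℂ) • w := by
    simp [Algebra.algebraMap_eq_smul_one]
    rw [← Complex.coe_smul]
    norm_cast
  have happly : (K ^ 2 + (dE ^ 2 : ℝ) • P - algebraMap ℝ (H →L[ℂ] H) (dE ^ 2)) w
      = (K ^ 2) w + ((dE ^ 2 : ℝ) : ℂ) • (P w) - ((dE ^ 2 : ℝ) : ℂ) • w := by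
    rw [ContinuousLinearMap.sub_apply, ContinuousLinearMap.add_apply,
      ContinuousLinearMap.smul_apply, halg, Complex.coe_smul]
    norm_cast
  have hexpand : RCLike.re ((inner ℂ ((K ^ 2 + (dE ^ 2 : ℝ) • P - algebraMap ℝ (H →L[ℂ] H) (dE ^ 2)) w) w : ℂ))
      = ‖K w‖ ^ 2 - dE ^ 2 * ‖w‖ ^ 2 := by
    rw [happly, inner_sub_left, inner_add_left, hKinner, inner_smul_left, inner_smul_left,
      hPinner, inner_self_eq_norm_sq_to_K]
    simp [Complex.conj_ofReal, ← Complex.ofReal_pow]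
  replace hinner : 0 ≤ ‖K w‖ ^ 2 - dE ^ 2 * ‖w‖ ^ 2 := by
    rw [← hexpand]; exact (Complex.nonneg_iff.mp hinner).1
  rw [← hKapp w]
  nlinarith [norm_nonneg (K w), norm_nonneg w, hinner, sq_nonneg (dE * ‖w‖ - ‖K w‖),
    mul_nonneg hdEpos.le (norm_nonneg w)]




/-- Eigenfunction approximation identity: if `E` is an isolated eigenvalue of the
self-adjoint operator `G`, with eigenspace `Esp` and spectral gap `dE > 0`, and the
nonzero vector `v` satisfies `‖(Re λ - G)v‖ = |Im λ| ‖v‖` and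
`Im λ ⟨(Re λ - G)v, v⟩ = 0` with `Im λ ≠ 0`, then `‖(E - G)v‖² = |E - λ|² ‖v‖²` and
`‖v - Πv‖ ≤ (|E - λ|/dE) ‖v‖` for `Π` the orthogonal projection onto `Esp`. -/
theorem stmt2 {H : Type*} [NormedAddCommGroup H] [InnerProductSpace ℂ H] [CompleteSpace H]
    (G : H →L[ℂ] H) (hG : IsSelfAdjoint G)
    (E : ℝ) (hE : (E : ℂ) ∈ spectrum ℂ G)
    (hEiso : ∃ U : Set ℂ, IsOpen U ∧ (E : ℂ) ∈ U ∧ U ∩ spectrum ℂ G = {(E : ℂ)})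
    (Esp : Submodule ℂ H) [Esp.HasOrthogonalProjection]
    (hEsp : ∀ x : H, x ∈ Esp ↔ G x = (E : ℂ) • x)
    (hEev : Esp ≠ ⊥)
    (dE : ℝ) (hdE : dE = Metric.infDist ((E : ℂ)) (spectrum ℂ G \ {(E : ℂ)}))
    (hdEpos : 0 < dE)
    (lam : ℂ) (hlam : lam.im ≠ 0) (v : H) (hv : v ≠ 0)
    (h1 : ‖(lam.re : ℂ) • v - G v‖ = |lam.im| * ‖v‖)
    (h2 : (lam.im : ℂ) * (inner ℂ ((lam.re : ℂ) • v - G v) v : ℂ) = 0) :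
    ‖(E : ℂ) • v - G v‖ ^ 2 = ‖(E : ℂ) - lam‖ ^ 2 * ‖v‖ ^ 2 ∧
      ‖v - (Esp.orthogonalProjectionOnto v : H)‖ ≤ (‖(E : ℂ) - lam‖ / dE) * ‖v‖ := by
  -- the spectral gap in real form
  have hgap : ∀ x ∈ spectrum ℝ G, x ≠ E → dE ≤ |x - E| := by
    intro x hx hne
    have hxC : (x : ℂ) ∈ spectrum ℂ G := by
      have := spectrum.algebraMap_mem ℂ hx
      simpa using this
    have hmem : (x : ℂ) ∈ spectrum ℂ G \ {(E : ℂ)} := by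
      refine ⟨hxC, ?_⟩
      simp only [Set.mem_singleton_iff]
      exact fun h => hne (by exact_mod_cast h)
    have hle := Metric.infDist_le_dist_of_mem (x := (E : ℂ)) hmem
    rw [hdE]
    refine hle.trans (le_of_eq ?_)
    rw [Complex.dist_eq, ← Complex.ofReal_sub, Complex.norm_real, Real.norm_eq_abs, abs_sub_comm]
  -- part 1
  have him : (lam.im : ℂ) ≠ 0 := Complex.ofReal_ne_zero.mpr hlam
  have hu : (inner ℂ ((lam.re : ℂ) • v - G v) v : ℂ) = 0 :=
    (mul_eq_zero.mp h2).resolve_left him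
  have hvu : (inner ℂ v ((lam.re : ℂ) • v - G v) : ℂ) = 0 := by
    rw [← inner_conj_symm, hu, map_zero]
  have hdecv : (E : ℂ) • v - G v = ((E - lam.re : ℝ) : ℂ) • v + ((lam.re : ℂ) • v - G v) := by
    push_cast
    module
  have habs2 : ‖(E : ℂ) - lam‖ ^ 2 = (E - lam.re) ^ 2 + lam.im ^ 2 := by
    rw [Complex.sq_norm, Complex.normSq_apply]
    simp [Complex.sub_re, Complex.sub_im]
    ring
  have hpart1 : ‖(E : ℂ) • v - G v‖ ^ 2 = ‖(E : ℂ) - lam‖ ^ 2 * ‖v‖ ^ 2 := by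
    rw [hdecv, norm_add_sq (𝕜 := ℂ), inner_smul_left, hvu, mul_zero]
    rw [norm_smul, h1, habs2]
    simp only [Complex.norm_real, map_zero, mul_zero, zero_mul, add_zero, Real.norm_eq_abs]
    rw [mul_pow, mul_pow, sq_abs, sq_abs]
    ring
  refine ⟨hpart1, ?_⟩
  -- part 2
  set p : H := ((Esp.orthogonalProjectionOnto v : Esp) : H) with hp
  have hpmem : p ∈ Esp := SetLike.coe_mem _
  have hworth : v - p ∈ Espᗮ := Submodule.sub_starProjection_mem_orthogonal (K := Esp) v
  have hGp : G p = (E : ℂ) • p := (hEsp p).mp hpmem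
  have hKv : (E : ℂ) • (v - p) - G (v - p) = (E : ℂ) • v - G v := by
    rw [map_sub, hGp, smul_sub]; abel
  have hkey := gap_lower_bound G hG E dE hdEpos hgap Esp hEsp (v - p) hworth
  rw [hKv] at hkey
  have hle2 : ‖(E : ℂ) • v - G v‖ ≤ ‖(E : ℂ) - lam‖ * ‖v‖ := by
    have h0 : ‖(E : ℂ) • v - G v‖ ^ 2 = (‖(E : ℂ) - lam‖ * ‖v‖) ^ 2 := by
      rw [hpart1]; ring
    nlinarith [norm_nonneg ((E : ℂ) • v - G v),
      mul_nonneg (norm_nonneg ((E : ℂ) - lam)) (norm_nonneg v)]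
  rw [div_mul_eq_mul_div, le_div_iff₀ hdEpos]
  calc ‖v - p‖ * dE = dE * ‖v - p‖ := by ring
    _ ≤ ‖(E : ℂ) • v - G v‖ := hkey
    _ ≤ ‖(E : ℂ) - lam‖ * ‖v‖ := hle2
end

section
/- With I(m,n) = (cₘ cₙ)^{-1} ∫₀^∞ hₘ(r) hₙ(r) e^{-r²} dr and P(n) = ∏_{l=1}^n (1 + 1/(2l)) (with P(0)=1), one has for m = 2k, n = 2j+1: I(2k, 2j+1) = (-1)^{k-j+1} √(2 P(k) P(j)) / ((2k - 2j - 1) √(π (2k+1))). -/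
open Polynomial MeasureTheory

/-- Physicists' Hermite polynomials, `h₀ = 1`, `h_{n+1}(x) = 2x hₙ(x) - hₙ'(x)`. -/
noncomputable def physHermite : ℕ → Polynomial ℝ
  | 0 => 1
  | n + 1 => C 2 * X * physHermite n - derivative (physHermite n)

/-- Normalisation constants `cₙ = √(2^{n-1} n! √π)`. -/
noncomputable def hermC (n : ℕ) : ℝ :=
  Real.sqrt ((2 : ℝ) ^ ((n : ℝ) - 1) * n.factorial * Real.sqrt Real.pi)

/-- Normalised odd Hermite functions `Φₖ(r) = c_{2k+1}⁻¹ h_{2k+1}(r) e^{-r²/2}`. -/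
noncomputable def PhiFn (k : ℕ) (r : ℝ) : ℝ :=
  (hermC (2 * k + 1))⁻¹ * (physHermite (2 * k + 1)).eval r * Real.exp (-r ^ 2 / 2)

/-- `P(n) = ∏_{l=1}^n (1 + 1/(2l))`, `P(0) = 1`. -/
noncomputable def Pprod (n : ℕ) : ℝ :=
  ∏ l ∈ Finset.range n, (1 + 1 / (2 * ((l : ℝ) + 1)))

section aux
open Real Filter

lemma physHermite_succ' (n : ℕ) :
    physHermite (n+1) = C 2 * X * physHermite n - derivative (physHermite n) := rfl

lemma physHermite_deriv' (n : ℕ) :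
    derivative (physHermite (n+1)) = C (2*(n+1) : ℝ) * physHermite n := by
  induction n with
  | zero => simp [physHermite]
  | succ n ih =>
    rw [physHermite_succ' (n+1), derivative_sub, derivative_mul, derivative_mul, ih,
      physHermite_succ' n]
    simp only [C_mul, C_add, C_1, derivative_C, derivative_X]
    push_cast [C_add, C_mul, C_1]
    simp only [derivative_add, derivative_mul, derivative_C, derivative_one, zero_mul,
      zero_add, mul_zero, add_zero]
    ring

lemma physHermite_even_zero' (k : ℕ) :
    (physHermite (2*k)).eval 0 = (-1:ℝ)^k * (2*k).factorial / k.factorial := by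
  induction k with
  | zero => simp [physHermite]
  | succ k ih =>
    have h2 : 2*(k+1) = (2*k+1) + 1 := by ring
    rw [h2, physHermite_succ', physHermite_deriv']
    simp only [eval_sub, eval_mul, eval_C, eval_X, mul_zero, zero_mul, ih]
    have hfac : ((2*(k+1)).factorial : ℝ) = (2*(2*k+1)) * (k+1) * (2*k).factorial := by
      have h3 : 2*(k+1) = (2*k+1)+1 := by ring
      rw [h3, Nat.factorial_succ, Nat.factorial_succ]
      push_cast
      ring
    rw [← h2] at *
    rw [hfac, Nat.factorial_succ]
    have hk : (k.factorial : ℝ) ≠ 0 := Nat.cast_ne_zero.mpr k.factorial_ne_zero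
    have hk1 : ((k:ℝ) + 1) ≠ 0 := by positivity
    push_cast
    field_simp
    ring

lemma physHermite_odd_zero' (k : ℕ) : (physHermite (2*k+1)).eval 0 = 0 := by
  induction k with
  | zero => simp [physHermite]
  | succ k ih =>
    rw [show 2*(k+1)+1 = (2*k+1)+1+1 from by ring, physHermite_succ', physHermite_deriv']
    simp only [eval_sub, eval_mul, eval_C, eval_X, mul_zero, zero_mul, ih, zero_sub, neg_eq_zero]

lemma integrableOn_poly_gauss (p : ℝ[X]) :
    IntegrableOn (fun x : ℝ => p.eval x * Real.exp (-x^2)) (Set.Ioi 0) := by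
  induction p using Polynomial.induction_on' with
  | add p q hp hq =>
    apply IntegrableOn.congr_fun (hp.add hq) _ measurableSet_Ioi
    intro x _
    simp [add_mul]
  | monomial i c =>
    have h := (integrableOn_rpow_mul_exp_neg_mul_sq (b := 1) (s := (i:ℝ)) one_pos
      (lt_of_lt_of_le neg_one_lt_zero (Nat.cast_nonneg i))).const_mul c
    apply IntegrableOn.congr_fun h _ measurableSet_Ioi
    intro x hx
    simp only [Set.mem_Ioi] at hx
    simp only [Real.rpow_natCast, Polynomial.eval_monomial, neg_one_mul]
    ring

lemma tendsto_poly_gauss (p : ℝ[X]) :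
    Tendsto (fun x : ℝ => p.eval x * Real.exp (-x^2)) atTop (nhds 0) := by
  have h1 : Tendsto (fun x : ℝ => p.eval x / Real.exp x) atTop (nhds 0) :=
    p.tendsto_div_exp_atTop
  have h2 : Tendsto (fun x : ℝ => Real.exp (x - x^2)) atTop (nhds 0) := by
    apply Real.tendsto_exp_atBot.comp
    apply tendsto_atBot_mono' atTop (f₁ := fun x : ℝ => -x)
    · filter_upwards [eventually_ge_atTop (2:ℝ)] with x hx
      nlinarith
    · exact tendsto_neg_atBot_iff.mpr tendsto_id
  have h3 := h1.mul h2
  rw [mul_zero] at h3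
  apply h3.congr
  intro x
  rw [div_mul_eq_mul_div, div_eq_iff (Real.exp_ne_zero _), mul_assoc, ← Real.exp_add]
  rw [show -x^2 + x = x - x^2 by ring]

lemma hermite_step (n m : ℕ) :
    ∫ x in Set.Ioi (0:ℝ),
        (physHermite (n+1)).eval x * (physHermite m).eval x * Real.exp (-x^2)
      = (physHermite n).eval 0 * (physHermite m).eval 0
        + ∫ x in Set.Ioi (0:ℝ),
            (physHermite n).eval x * (derivative (physHermite m)).eval x * Real.exp (-x^2) := by
  set p := physHermite n
  set q := physHermite m
  set F : ℝ → ℝ := fun x => p.eval x * q.eval x * Real.exp (-x^2) with hF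
  set G : ℝ → ℝ := fun x =>
    ((derivative p * q + p * derivative q - C 2 * X * (p * q)).eval x) * Real.exp (-x^2) with hG
  have hderiv : ∀ x ∈ Set.Ici (0:ℝ), HasDerivAt F (G x) x := by
    intro x _
    have hexp : HasDerivAt (fun x : ℝ => Real.exp (-x^2)) (Real.exp (-x^2) * -(2*x^1)) x :=
      ((hasDerivAt_pow 2 x).neg).exp
    have hp := p.hasDerivAt x
    have hq := q.hasDerivAt x
    have := (hp.fun_mul hq).fun_mul hexp
    refine this.congr_deriv ?_
    simp only [hG, eval_sub, eval_add, eval_mul, eval_C, eval_X]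
    ring
  have hGint : IntegrableOn G (Set.Ioi 0) :=
    integrableOn_poly_gauss (derivative p * q + p * derivative q - C 2 * X * (p * q))
  have hFtend : Tendsto F atTop (nhds 0) := tendsto_poly_gauss (p * q)
    |>.congr (by intro x; simp [hF])
  have key : ∫ x in Set.Ioi (0:ℝ), G x = 0 - F 0 :=
    integral_Ioi_of_hasDerivAt_of_tendsto' hderiv hGint hFtend
  have split : (fun x : ℝ => (physHermite (n+1)).eval x * q.eval x * Real.exp (-x^2))
      = fun x => (p.eval x * (derivative q).eval x * Real.exp (-x^2)) + (- G x) := by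
    funext x
    rw [physHermite_succ']
    simp only [hG, eval_sub, eval_add, eval_mul, eval_C, eval_X]
    ring
  rw [split, integral_add]
  · rw [integral_neg, key]
    simp only [hF]
    norm_num
    exact add_comm _ _
  · apply (integrableOn_poly_gauss (p * derivative q)).congr_fun _ measurableSet_Ioi
    intro x _; simp [eval_mul]
  · exact hGint.neg

lemma odd_real_ne_zero (a b : ℕ) : (2*(a:ℝ) - 2*(b:ℝ) - 1) ≠ 0 := by
  have h : (2*(a:ℝ) - 2*(b:ℝ) - 1) = ((2*(a:ℤ) - 2*(b:ℤ) - 1 : ℤ) : ℝ) := by push_cast; ring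
  rw [h]
  exact_mod_cast (by omega : (2*(a:ℤ) - 2*(b:ℤ) - 1) ≠ 0)

lemma Jval (k : ℕ) : ∀ j : ℕ,
    ∫ x in Set.Ioi (0:ℝ),
        (physHermite (2*k)).eval x * (physHermite (2*j+1)).eval x * Real.exp (-x^2)
      = (-1:ℝ)^(k+j+1) * (2*k).factorial * (2*j+1).factorial /
          (k.factorial * j.factorial * (2*(k:ℝ) - 2*(j:ℝ) - 1)) := by
  induction k with
  | zero =>
    intro j
    have comm : ∀ x : ℝ,
        (physHermite (2*0)).eval x * (physHermite (2*j+1)).eval x * Real.exp (-x^2)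
        = (physHermite (2*j+1)).eval x * (physHermite 0).eval x * Real.exp (-x^2) := by
      intro x; norm_num; ring
    simp_rw [comm]
    rw [show 2*j+1 = (2*j)+1 from rfl, hermite_step (2*j) 0]
    have hd0 : derivative (physHermite 0) = 0 := by simp [physHermite]
    simp only [hd0, eval_zero, mul_zero, zero_mul, integral_zero, add_zero]
    rw [physHermite_even_zero' j]
    have h0 : (physHermite 0).eval 0 = 1 := by simp [physHermite]
    rw [h0]
    have hfac : ((2*j+1).factorial : ℝ) = (2*(j:ℝ)+1) * (2*j).factorial := by
      rw [Nat.factorial_succ]; push_cast; ring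
    have hD := odd_real_ne_zero 0 j
    have hjf : ((j.factorial : ℝ)) ≠ 0 := Nat.cast_ne_zero.mpr j.factorial_ne_zero
    rw [eq_div_iff (mul_ne_zero (mul_ne_zero
      (Nat.cast_ne_zero.mpr (Nat.factorial_ne_zero 0)) hjf) hD)]
    rw [hfac]
    simp only [pow_add, pow_succ, pow_zero, pow_one]
    push_cast
    field_simp [hjf]
    ring
  | succ k ih =>
    intro j
    rw [show 2*(k+1) = (2*k+1)+1 from by ring, hermite_step (2*k+1) (2*j+1)]
    rw [physHermite_odd_zero' k, zero_mul, zero_add]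
    rw [show (2*j+1) = (2*j)+1 from rfl, physHermite_deriv' (2*j)]
    have pull : ∀ x : ℝ,
        (physHermite (2*k+1)).eval x * (C (2*((2*j:ℕ)+1) : ℝ) * physHermite (2*j)).eval x *
            Real.exp (-x^2)
        = (2*(2*(j:ℝ)+1)) *
            ((physHermite ((2*k)+1)).eval x * (physHermite (2*j)).eval x * Real.exp (-x^2)) := by
      intro x; simp only [eval_mul, eval_C]; push_cast; ring
    simp_rw [pull]
    rw [integral_const_mul, hermite_step (2*k) (2*j)]
    rw [physHermite_even_zero' k]
    cases j with
    | zero =>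
      have hd0 : derivative (physHermite 0) = 0 := by
        show derivative 1 = 0; simp
      have h0 : (physHermite 0).eval 0 = (1:ℝ) := by show eval 0 (1:ℝ[X]) = 1; simp
      rw [hd0, h0]
      simp only [eval_zero, mul_zero, zero_mul, integral_zero, add_zero]
      have hfac : ((2*k+1+1).factorial : ℝ)
          = (2*(k:ℝ)+2) * (2*(k:ℝ)+1) * (2*k).factorial := by
        rw [Nat.factorial_succ, Nat.factorial_succ]
        push_cast; ring
      have hfacK : (((k+1).factorial : ℝ)) = ((k:ℝ)+1) * k.factorial := by
        rw [Nat.factorial_succ]; push_cast; ring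
      have hkf : ((k.factorial : ℝ)) ≠ 0 := Nat.cast_ne_zero.mpr k.factorial_ne_zero
      rw [eq_div_iff (mul_ne_zero (mul_ne_zero
        (Nat.cast_ne_zero.mpr (Nat.factorial_ne_zero (k+1)))
        (Nat.cast_ne_zero.mpr (Nat.factorial_ne_zero 0))) (odd_real_ne_zero (k+1) 0))]
      rw [hfac, hfacK]
      simp only [pow_add, pow_succ, pow_zero, pow_one, Nat.factorial_zero]
      push_cast
      field_simp [hkf]
      ring
    | succ j =>
      rw [show 2*(j+1) = (2*j+1)+1 from by ring] at *
      rw [physHermite_deriv' (2*j+1)]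
      have pull2 : ∀ x : ℝ,
          (physHermite (2*k)).eval x * (C (2*((2*j+1:ℕ)+1) : ℝ) * physHermite (2*j+1)).eval x *
              Real.exp (-x^2)
          = (2*(2*(j:ℝ)+2)) *
              ((physHermite (2*k)).eval x * (physHermite (2*j+1)).eval x * Real.exp (-x^2)) := by
        intro x; simp only [eval_mul, eval_C]; push_cast; ring
      simp_rw [pull2]
      rw [integral_const_mul, ih j]
      rw [show 2*j+1+1 = 2*(j+1) from by ring, physHermite_even_zero' (j+1)]
      have hD := odd_real_ne_zero k j
      have hkf : ((k.factorial : ℝ)) ≠ 0 := Nat.cast_ne_zero.mpr k.factorial_ne_zero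
      have hjf : ((j.factorial : ℝ)) ≠ 0 := Nat.cast_ne_zero.mpr j.factorial_ne_zero
      have hfacK2 : ((2*k+1+1).factorial : ℝ)
          = (2*(k:ℝ)+2) * (2*(k:ℝ)+1) * (2*k).factorial := by
        rw [Nat.factorial_succ, Nat.factorial_succ]
        push_cast; ring
      have hfacK : (((k+1).factorial : ℝ)) = ((k:ℝ)+1) * k.factorial := by
        rw [Nat.factorial_succ]; push_cast; ring
      have hfacJ2 : ((2*(j+1)).factorial : ℝ)
          = (2*(j:ℝ)+2) * (2*(j:ℝ)+1) * (2*j).factorial := by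
        rw [show 2*(j+1) = (2*j)+1+1 from by ring, Nat.factorial_succ, Nat.factorial_succ]
        push_cast; ring
      have hfacJ : (((j+1).factorial : ℝ)) = ((j:ℝ)+1) * j.factorial := by
        rw [Nat.factorial_succ]; push_cast; ring
      have hfacJodd : ((2*(j+1)+1).factorial : ℝ)
          = (2*(j:ℝ)+3) * (2*(j:ℝ)+2) * (2*j+1).factorial := by
        rw [show 2*(j+1)+1 = (2*j+1)+1+1 from by ring, Nat.factorial_succ, Nat.factorial_succ]
        push_cast; ring
      have hfacJodd' : ((2*j+1).factorial : ℝ) = (2*(j:ℝ)+1) * (2*j).factorial := by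
        rw [Nat.factorial_succ]; push_cast; ring
      rw [eq_div_iff (mul_ne_zero (mul_ne_zero
        (Nat.cast_ne_zero.mpr (Nat.factorial_ne_zero (k+1)))
        (Nat.cast_ne_zero.mpr (Nat.factorial_ne_zero (j+1)))) (odd_real_ne_zero (k+1) (j+1)))]
      rw [hfacK2, hfacK, hfacJ2, hfacJ, hfacJodd, hfacJodd']
      simp only [pow_add, pow_succ, pow_zero, pow_one]
      push_cast
      have hD' : 2*((k:ℝ)-(j:ℝ)) - 1 ≠ 0 := by contrapose! hD; linarith
      field_simp [hD, hD', hkf, hjf]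
      ring

lemma Pprod_eq (n : ℕ) :
    Pprod n = (2*n+1).factorial / (4^n * ((n.factorial : ℝ))^2) := by
  induction n with
  | zero => simp [Pprod]
  | succ n ih =>
    rw [Pprod, Finset.prod_range_succ, ← Pprod, ih]
    have h1 : ((2*(n+1)+1).factorial : ℝ)
        = (2*(n:ℝ)+3) * (2*(n:ℝ)+2) * (2*n+1).factorial := by
      rw [show 2*(n+1)+1 = (2*n+1)+1+1 from by ring, Nat.factorial_succ, Nat.factorial_succ]
      push_cast; ring
    have h2 : (((n+1).factorial : ℝ)) = ((n:ℝ)+1) * n.factorial := by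
      rw [Nat.factorial_succ]; push_cast; ring
    rw [h1, h2]
    have hnf : ((n.factorial : ℝ)) ≠ 0 := Nat.cast_ne_zero.mpr n.factorial_ne_zero
    have hn1 : ((n:ℝ)+1) ≠ 0 := by positivity
    have h4 : ((4:ℝ))^n ≠ 0 := by positivity
    field_simp
    ring

lemma hermC_mul (k j : ℕ) :
    hermC (2*k) * hermC (2*j+1)
      = Real.sqrt ((2:ℝ)^(2*k) * 2^(2*j) * (2*k).factorial * (2*j+1).factorial
          * Real.pi / 2) := by
  rw [hermC, hermC, ← Real.sqrt_mul (by positivity)]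
  congr 1
  have e1 : (2:ℝ) ^ (((2*k : ℕ) : ℝ) - 1) = 2^(2*k) / 2 := by
    rw [Real.rpow_sub two_pos, Real.rpow_one, Real.rpow_natCast]
  have e2 : (2:ℝ) ^ (((2*j+1 : ℕ) : ℝ) - 1) = 2^(2*j+1) / 2 := by
    rw [Real.rpow_sub two_pos, Real.rpow_one, Real.rpow_natCast]
  rw [e1, e2]
  have hpi : Real.sqrt Real.pi * Real.sqrt Real.pi = Real.pi :=
    Real.mul_self_sqrt Real.pi_pos.le
  rw [pow_succ]
  linear_combination (2 ^ (2*k) / 2 * ((2*k).factorial : ℝ) * (2 ^ (2*j))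
    * ((2*j+1).factorial : ℝ)) * hpi

end aux

/-- Closed form of the mixed-parity normalised integral:
`I(2k, 2j+1) = (-1)^{k-j+1} √(2 P(k) P(j)) / ((2k-2j-1) √(π(2k+1)))`. -/
theorem stmt13 (k j : ℕ) :
    (1 / (hermC (2 * k) * hermC (2 * j + 1))) *
        (∫ r in Set.Ioi (0 : ℝ),
          (physHermite (2 * k)).eval r * (physHermite (2 * j + 1)).eval r *
            Real.exp (-r ^ 2)) =
      (-1 : ℝ) ^ (k + j + 1) * Real.sqrt (2 * Pprod k * Pprod j) /
        ((2 * (k : ℝ) - 2 * (j : ℝ) - 1) * Real.sqrt (Real.pi * (2 * (k : ℝ) + 1))) := by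
  rw [Jval k j, hermC_mul k j]
  set Z : ℝ := (2:ℝ)^(2*k) * 2^(2*j) * (2*k).factorial * (2*j+1).factorial * Real.pi / 2
    with hZdef
  set E : ℝ := Real.pi * (2 * (k : ℝ) + 1) with hEdef
  set W : ℝ := 2 * Pprod k * Pprod j with hWdef
  set L : ℝ := ((2*k).factorial : ℝ) * ((2*j+1).factorial : ℝ) /
    ((k.factorial : ℝ) * (j.factorial : ℝ)) with hLdef
  have hPk : 0 < Pprod k := by rw [Pprod_eq]; positivity
  have hPj : 0 < Pprod j := by rw [Pprod_eq]; positivity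
  have hZpos : 0 < Z := by rw [hZdef]; positivity
  have hEpos : 0 < E := by rw [hEdef]; positivity
  have hWpos : 0 < W := by rw [hWdef]; positivity
  have hLpos : 0 < L := by rw [hLdef]; positivity
  have hkf : ((k.factorial : ℝ)) ≠ 0 := Nat.cast_ne_zero.mpr k.factorial_ne_zero
  have hjf : ((j.factorial : ℝ)) ≠ 0 := Nat.cast_ne_zero.mpr j.factorial_ne_zero
  have hD := odd_real_ne_zero k j
  have h3 : L^2 * E = Z * W := by
    rw [hLdef, hZdef, hEdef, hWdef, Pprod_eq, Pprod_eq]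
    have h4k : ((4:ℝ))^k = 2^(2*k) := by
      rw [show (4:ℝ) = 2^2 from by norm_num, ← pow_mul]
    have h4j : ((4:ℝ))^j = 2^(2*j) := by
      rw [show (4:ℝ) = 2^2 from by norm_num, ← pow_mul]
    have hfacK : ((2*k+1).factorial : ℝ) = (2*(k:ℝ)+1) * (2*k).factorial := by
      rw [Nat.factorial_succ]; push_cast; ring
    rw [h4k, h4j, hfacK]
    have h2k : ((2:ℝ))^(2*k) ≠ 0 := by positivity
    have h2j : ((2:ℝ))^(2*j) ≠ 0 := by positivity
    field_simp
  have key : L * Real.sqrt E = Real.sqrt Z * Real.sqrt W := by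
    have h1 : Real.sqrt (L^2 * E) = L * Real.sqrt E := by
      rw [Real.sqrt_mul (sq_nonneg L) E, Real.sqrt_sq hLpos.le]
    rw [← h1, h3, Real.sqrt_mul hZpos.le W]
  have hsZ : Real.sqrt Z ≠ 0 := (Real.sqrt_pos.mpr hZpos).ne'
  have hsE : Real.sqrt E ≠ 0 := (Real.sqrt_pos.mpr hEpos).ne'
  rw [hLdef] at key
  field_simp at key
  field_simp [hsZ, hsE, hD, hkf, hjf]
  rw [key]; ring
end
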